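/- arXiv:2602.07230 — 2 statements merged into one kernel-verified Lean document; each statement's English description precedes it below -/
import Mathlib

section
/- Every nonnegative b-transshipment x on a finite directed acyclic graph admits a decomposition into at most |A| directed paths, each from a source (vertex with b(v) > 0) to a sink (vertex with b(v) < 0), such that for every arc a the sum of path values over paths using a equals x_a. -/
open Finset

namespace StmtFour
section
set_option linter.unusedSectionVars false
set_option linter.unusedVariables false
set_option maxHeartbeats 1000000
variable {V α : Type*} [Fintype V] [Fintype α] [DecidableEq V] [DecidableEq α]
  (tl hd : α → V) (x : α → ℝ) (b : V → ℝ)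


lemma sum_count_filter (g : α → V) (v : V) (p : List α) :
    ∑ a ∈ univ.filter (fun a => g a = v), p.count a = (p.map g).count v := by
  induction p with
  | nil => simp
  | cons e q ih =>
      simp only [List.count_cons, List.map_cons, Finset.sum_add_distrib, ih, beq_iff_eq]
      congr 1
      rw [Finset.sum_ite_eq (univ.filter (fun a => g a = v)) e (fun _ => 1)]
      by_cases h : g e = v <;> simp [h]

lemma count_single_real (v w : V) :
    ((List.count v [w] : ℕ) : ℝ) = if w = v then 1 else 0 := by
  by_cases h : w = v <;> simp [h, List.count_singleton, Ne.symm]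

lemma telescope (p : List α) (hne : p ≠ [])
    (hch : p.Chain' (fun a a' => hd a = tl a')) (v : V) :
    ((p.map tl).count v : ℝ) - ((p.map hd).count v : ℝ) =
      (if tl (p.head hne) = v then 1 else 0) - (if hd (p.getLast hne) = v then 1 else 0) := by
  induction p with
  | nil => simp at hne
  | cons e q ih =>
      cases q with
      | nil =>
          simp only [List.map_cons, List.map_nil]
          rw [count_single_real, count_single_real]
          rfl
      | cons c q' =>
          have hch' : (c :: q').Chain' (fun a a' => hd a = tl a') := hch.tail
          have hec : hd e = tl c := (List.isChain_cons_cons.mp hch).1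
          have ihq := ih (by simp) hch'
          have h1 : (c :: q').head (by simp) = c := rfl
          rw [h1] at ihq
          have h2 : (e :: c :: q').head hne = e := rfl
          have h3 : (e :: c :: q').getLast hne = (c :: q').getLast (by simp) := by
            simp [List.getLast_cons]
          rw [h2, h3]
          simp only [List.map_cons, List.count_cons, beq_iff_eq] at ihq ⊢
          push_cast at ihq ⊢
          have e1 : ∀ w : V, (if v = w then (1:ℝ) else 0) = if w = v then 1 else 0 := by
            intro w; by_cases h : w = v <;> simp [h, Ne.symm]
          rw [hec]
          linarith [ihq]

lemma wf_fwd (hacyc : ∀ v : V, ¬ Relation.TransGen (fun u z => ∃ a, tl a = u ∧ hd a = z) v v) :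
    WellFounded (fun z u => ∃ a, 0 < x a ∧ tl a = u ∧ hd a = z) := by
  set r : V → V → Prop := fun z u => ∃ a, 0 < x a ∧ tl a = u ∧ hd a = z with hr
  have hmono : ∀ {c d}, r c d → Function.swap (fun u z => ∃ a, tl a = u ∧ hd a = z) c d := by
    rintro c d ⟨a, _, h1, h2⟩; exact ⟨a, h1, h2⟩
  have hirr : ∀ v, ¬ Relation.TransGen r v v := by
    intro v hv
    exact hacyc v (Relation.transGen_swap.mp (Relation.TransGen.mono (fun _ _ h => hmono h) _ _ hv))
  have : IsTrans V (Relation.TransGen r) := ⟨fun _ _ _ h1 h2 => h1.trans h2⟩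
  have : IsIrrefl V (Relation.TransGen r) := ⟨hirr⟩
  exact Subrelation.wf (fun h => Relation.TransGen.single h)
    (Finite.wellFounded_of_trans_of_irrefl (Relation.TransGen r))

lemma wf_bwd (hacyc : ∀ v : V, ¬ Relation.TransGen (fun u z => ∃ a, tl a = u ∧ hd a = z) v v) :
    WellFounded (fun w u => ∃ a, 0 < x a ∧ tl a = w ∧ hd a = u) := by
  set r : V → V → Prop := fun w u => ∃ a, 0 < x a ∧ tl a = w ∧ hd a = u with hr
  have hirr : ∀ v, ¬ Relation.TransGen r v v := by
    intro v hv
    exact hacyc v (Relation.TransGen.mono (fun c d => by rintro ⟨a, _, h1, h2⟩; exact ⟨a, h1, h2⟩) _ _ hv)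
  have : IsTrans V (Relation.TransGen r) := ⟨fun _ _ _ h1 h2 => h1.trans h2⟩
  have : IsIrrefl V (Relation.TransGen r) := ⟨hirr⟩
  exact Subrelation.wf (fun h => Relation.TransGen.single h)
    (Finite.wellFounded_of_trans_of_irrefl (Relation.TransGen r))

lemma exists_pos_arc {s : Finset α} (hx : ∀ a, 0 ≤ x a) (h : 0 < ∑ a ∈ s, x a) :
    ∃ a ∈ s, 0 < x a := by
  by_contra hc
  push_neg at hc
  have : ∑ a ∈ s, x a ≤ 0 := Finset.sum_nonpos (fun a ha => hc a ha)
  linarith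

variable (b : V → ℝ)

/-- forward: from the tail of a positive arc, reach a sink. -/
lemma reach_sink (hx : ∀ a, 0 ≤ x a)
    (hcons : ∀ v : V,
      ∑ a ∈ univ.filter (fun a => tl a = v), x a
        - ∑ a ∈ univ.filter (fun a => hd a = v), x a = b v)
    (hacyc : ∀ v : V, ¬ Relation.TransGen (fun u z => ∃ a, tl a = u ∧ hd a = z) v v)
    (u : V) (a : α) (ha : 0 < x a) (hta : tl a = u) :
    ∃ (p : List α) (hne : p ≠ []), p.Chain' (fun a a' => hd a = tl a') ∧
      (∀ e ∈ p, 0 < x e) ∧ tl (p.head hne) = u ∧ b (hd (p.getLast hne)) < 0 := by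
  induction u using WellFounded.induction (wf_fwd tl hd x hacyc) generalizing a with
  | _ u IH =>
  by_cases hbv : b (hd a) < 0
  · exact ⟨[a], by simp, List.isChain_singleton a, by simpa using ha, hta, hbv⟩
  · push_neg at hbv
    have hin : x a ≤ ∑ e ∈ univ.filter (fun e => hd e = hd a), x e :=
      Finset.single_le_sum (fun e _ => hx e) (by simp)
    have hout : 0 < ∑ e ∈ univ.filter (fun e => tl e = hd a), x e := by
      have := hcons (hd a); linarith
    obtain ⟨a', ha'mem, ha'⟩ := exists_pos_arc x hx hout
    have hta' : tl a' = hd a := by simpa using ha'mem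
    obtain ⟨p, hne, hch, hpos, hhead, hlast⟩ :=
      IH (hd a) ⟨a, ha, hta, rfl⟩ a' ha' hta'
    refine ⟨a :: p, by simp, ?_, ?_, hta, ?_⟩
    · unfold List.Chain'; rw [List.isChain_cons]
      refine ⟨?_, hch⟩
      intro y hy
      rw [List.head?_eq_head hne] at hy
      cases hy
      rw [hhead]
    · intro e he
      rcases List.mem_cons.mp he with h | h
      · subst h; exact ha
      · exact hpos e h
    · rwa [List.getLast_cons hne]

/-- backward: from the head of a positive arc, reach a source (path ends at that head). -/
lemma reach_source (hx : ∀ a, 0 ≤ x a)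
    (hcons : ∀ v : V,
      ∑ a ∈ univ.filter (fun a => tl a = v), x a
        - ∑ a ∈ univ.filter (fun a => hd a = v), x a = b v)
    (hacyc : ∀ v : V, ¬ Relation.TransGen (fun u z => ∃ a, tl a = u ∧ hd a = z) v v)
    (u : V) (a : α) (ha : 0 < x a) (hha : hd a = u) :
    ∃ (p : List α) (hne : p ≠ []), p.Chain' (fun a a' => hd a = tl a') ∧
      (∀ e ∈ p, 0 < x e) ∧ hd (p.getLast hne) = u ∧ 0 < b (tl (p.head hne)) := by
  induction u using WellFounded.induction (wf_bwd tl hd x hacyc) generalizing a with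
  | _ u IH =>
  by_cases hbv : 0 < b (tl a)
  · exact ⟨[a], by simp, List.isChain_singleton a, by simpa using ha, hha, hbv⟩
  · push_neg at hbv
    have hout : x a ≤ ∑ e ∈ univ.filter (fun e => tl e = tl a), x e :=
      Finset.single_le_sum (fun e _ => hx e) (by simp)
    have hin : 0 < ∑ e ∈ univ.filter (fun e => hd e = tl a), x e := by
      have := hcons (tl a); linarith
    obtain ⟨a', ha'mem, ha'⟩ := exists_pos_arc x hx hin
    have hha' : hd a' = tl a := by simpa using ha'mem
    obtain ⟨p, hne, hch, hpos, hlast, hhead⟩ :=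
      IH (tl a) ⟨a, ha, rfl, hha⟩ a' ha' hha'
    refine ⟨p ++ [a], by simp, ?_, ?_, ?_, ?_⟩
    · unfold List.Chain'; rw [List.isChain_append]
      refine ⟨hch, List.isChain_singleton a, ?_⟩
      intro y hy z hz
      rw [List.getLast?_eq_getLast hne] at hy
      cases hy
      cases hz
      rw [hlast]
    · intro e he
      rcases List.mem_append.mp he with h | h
      · exact hpos e h
      · rcases List.mem_singleton.mp h with rfl; exact ha
    · rw [List.getLast_append_of_ne_nil _ (by simp)]
      simpa using hha
    · rw [List.head_append_of_ne_nil]  -- maybe wrong name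
      exact hhead

lemma ite_eq_comm {γ : Type*} {c d : V} {X Y : γ} :
    (if c = d then X else Y) = (if d = c then X else Y) := by
  by_cases h : c = d
  · simp [h]
  · simp [h, Ne.symm h]


lemma exists_path (hx : ∀ a, 0 ≤ x a)
    (hcons : ∀ v : V,
      ∑ a ∈ univ.filter (fun a => tl a = v), x a
        - ∑ a ∈ univ.filter (fun a => hd a = v), x a = b v)
    (hacyc : ∀ v : V, ¬ Relation.TransGen (fun u z => ∃ a, tl a = u ∧ hd a = z) v v)
    (a0 : α) (ha0 : 0 < x a0) :
    ∃ (p : List α) (hne : p ≠ []), p.Chain' (fun a a' => hd a = tl a') ∧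
      (∀ e ∈ p, 0 < x e) ∧ 0 < b (tl (p.head hne)) ∧ b (hd (p.getLast hne)) < 0 := by
  obtain ⟨p1, hne1, hch1, hpos1, hlast1, hhead1⟩ :=
    reach_source tl hd x b hx hcons hacyc (hd a0) a0 ha0 rfl
  by_cases hbt : b (hd a0) < 0
  · exact ⟨p1, hne1, hch1, hpos1, hhead1, by rwa [hlast1]⟩
  · push_neg at hbt
    have hin : x a0 ≤ ∑ e ∈ univ.filter (fun e => hd e = hd a0), x e :=
      Finset.single_le_sum (fun e _ => hx e) (by simp)
    have hout : 0 < ∑ e ∈ univ.filter (fun e => tl e = hd a0), x e := by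
      have := hcons (hd a0); linarith
    obtain ⟨a1, ha1mem, ha1⟩ := exists_pos_arc x hx hout
    have hta1 : tl a1 = hd a0 := by simpa using ha1mem
    obtain ⟨p2, hne2, hch2, hpos2, hhead2, hlast2⟩ :=
      reach_sink tl hd x b hx hcons hacyc (hd a0) a1 ha1 hta1
    refine ⟨p1 ++ p2, by simp [hne1], ?_, ?_, ?_, ?_⟩
    · unfold List.Chain'; rw [List.isChain_append]
      refine ⟨hch1, hch2, ?_⟩
      intro y hy z hz
      rw [List.getLast?_eq_getLast hne1] at hy
      rw [List.head?_eq_head hne2] at hz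
      cases hy; cases hz
      rw [hlast1, hhead2]
    · intro e he
      rcases List.mem_append.mp he with h | h
      exacts [hpos1 e h, hpos2 e h]
    · rw [List.head_append_of_ne_nil hne1]
      exact hhead1
    · rw [List.getLast_append_of_ne_nil _ hne2]
      exact hlast2

lemma aux_decomp
    (hacyc : ∀ v : V, ¬ Relation.TransGen (fun u z => ∃ a, tl a = u ∧ hd a = z) v v) :
    ∀ (n : ℕ) (x : α → ℝ) (b : V → ℝ),
    (∀ a, 0 ≤ x a) →
    (∀ v : V,
      ∑ a ∈ univ.filter (fun a => tl a = v), x a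
        - ∑ a ∈ univ.filter (fun a => hd a = v), x a = b v) →
    (univ.filter (fun a => x a ≠ 0)).card + (univ.filter (fun v => b v ≠ 0)).card ≤ n →
    ∃ (P : Finset (List α)) (f : List α → ℝ),
      (∀ p ∈ P, 0 < f p) ∧
      (∀ p ∈ P, ∃ hne : p ≠ [],
        p.Chain' (fun a a' => hd a = tl a') ∧
        0 < b (tl (p.head hne)) ∧ b (hd (p.getLast hne)) < 0) ∧
      (∀ a : α, ∑ p ∈ P, (p.count a : ℝ) * f p = x a) := by
  intro n
  induction n with
  | zero =>
      intro x b hx hcons hn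
      have hx0 : ∀ a, x a = 0 := by
        intro a
        by_contra h
        have : (univ.filter (fun a => x a ≠ 0)).Nonempty := ⟨a, by simp [h]⟩
        have := Finset.card_pos.mpr this
        omega
      exact ⟨∅, 0, by simp, by simp, fun a => by simp [hx0 a]⟩
  | succ n IH =>
      intro x b hx hcons hn
      by_cases hzero : ∀ a, x a = 0
      · exact ⟨∅, 0, by simp, by simp, fun a => by simp [hzero a]⟩
      push_neg at hzero
      obtain ⟨a0, ha0⟩ := hzero
      have ha0pos : 0 < x a0 := lt_of_le_of_ne (hx a0) (Ne.symm ha0)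
      obtain ⟨p, hne, hch, hpos, hbs, hbt⟩ := exists_path tl hd x b hx hcons hacyc a0 ha0pos
      set s := tl (p.head hne) with hs_def
      set t := hd (p.getLast hne) with ht_def
      have hst : s ≠ t := fun h => by rw [h] at hbs; linarith
      have hpne : p.toFinset.Nonempty := by
        cases p with
        | nil => exact absurd rfl hne
        | cons e q => exact ⟨e, by simp⟩
      set A := p.toFinset.inf' hpne (fun a => x a / p.count a) with hA_def
      set δ := min (b s) (min (-b t) A) with hδ_def
      have hApos : 0 < A := by
        rw [hA_def, Finset.lt_inf'_iff]
        intro a hamem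
        have hcnt : 0 < p.count a := List.count_pos_iff.mpr (List.mem_toFinset.mp hamem)
        exact div_pos (hpos a (List.mem_toFinset.mp hamem)) (by exact_mod_cast hcnt)
      have hδpos : 0 < δ := lt_min hbs (lt_min (by linarith) hApos)
      have hδs : δ ≤ b s := min_le_left _ _
      have hδt : δ ≤ -b t := le_trans (min_le_right _ _) (min_le_left _ _)
      have hδA : δ ≤ A := le_trans (min_le_right _ _) (min_le_right _ _)
      set x' : α → ℝ := fun a => x a - p.count a * δ with hx'_def
      set b' : V → ℝ := fun v => b v - (if v = s then δ else 0) + (if v = t then δ else 0)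
        with hb'_def
      -- key: arcs in p have count*δ ≤ x a
      have hkey : ∀ a ∈ p, (p.count a : ℝ) * δ ≤ x a := by
        intro a hap
        have hcnt : 0 < p.count a := List.count_pos_iff.mpr hap
        have hcnt' : (0:ℝ) < p.count a := by exact_mod_cast hcnt
        have h1 : δ ≤ x a / p.count a := le_trans hδA (Finset.inf'_le _ (List.mem_toFinset.mpr hap))
        calc (p.count a : ℝ) * δ ≤ (p.count a) * (x a / p.count a) := by
              exact mul_le_mul_of_nonneg_left h1 (le_of_lt hcnt')
          _ = x a := by field_simp
      have hx'nonneg : ∀ a, 0 ≤ x' a := by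
        intro a
        by_cases hap : a ∈ p
        · have := hkey a hap; simp only [hx'_def]; linarith
        · simp [hx'_def, List.count_eq_zero.mpr hap, hx a]
      have hcount_zero : ∀ a, x a = 0 → x' a = 0 := by
        intro a ha
        have : a ∉ p := fun hap => by have := hpos a hap; linarith
        simp [hx'_def, List.count_eq_zero.mpr this, ha]
      -- conservation for x', b'
      have hcons' : ∀ v : V,
          ∑ a ∈ univ.filter (fun a => tl a = v), x' a
            - ∑ a ∈ univ.filter (fun a => hd a = v), x' a = b' v := by
        intro v
        have htel := telescope tl hd p hne hch v
        have hct : (∑ a ∈ univ.filter (fun a => tl a = v), (p.count a : ℝ))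
            = ((p.map tl).count v : ℝ) := by
          rw [← sum_count_filter tl]; exact (Nat.cast_sum _ _).symm
        have hch' : (∑ a ∈ univ.filter (fun a => hd a = v), (p.count a : ℝ))
            = ((p.map hd).count v : ℝ) := by
          rw [← sum_count_filter hd]; exact (Nat.cast_sum _ _).symm
        simp only [hx'_def, Finset.sum_sub_distrib]
        rw [← Finset.sum_mul, ← Finset.sum_mul, hct, hch']
        have hcv := hcons v
        simp only [hb'_def]
        rw [← hs_def, ← ht_def] at htel
        rw [show (if s = v then (1:ℝ) else 0) = (if v = s then 1 else 0) from ite_eq_comm,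
           show (if t = v then (1:ℝ) else 0) = (if v = t then 1 else 0) from ite_eq_comm] at htel
        have hmul := congrArg (fun y => y * δ) htel
        split_ifs at hmul ⊢ <;> ring_nf at hmul ⊢ <;> linarith
      -- support inclusions
      have hsubx : univ.filter (fun a => x' a ≠ 0) ⊆ univ.filter (fun a => x a ≠ 0) := by
        intro a ha
        simp only [mem_filter, mem_univ, true_and] at ha ⊢
        exact fun h0 => ha (hcount_zero a h0)
      have hb't0 : b' t ≤ 0 := by
        show b t - (if t = s then δ else 0) + (if t = t then δ else 0) ≤ 0
        rw [if_neg (Ne.symm hst), if_pos rfl]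
        linarith
      have hb's0 : 0 ≤ b' s := by
        show 0 ≤ b s - (if s = s then δ else 0) + (if s = t then δ else 0)
        rw [if_pos rfl, if_neg hst]
        linarith
      have hsubb : univ.filter (fun v => b' v ≠ 0) ⊆ univ.filter (fun v => b v ≠ 0) := by
        intro v hv
        simp only [mem_filter, mem_univ, true_and] at hv ⊢
        intro h0
        apply hv
        have hvs : v ≠ s := fun h => by rw [h] at h0; linarith
        have hvt : v ≠ t := fun h => by rw [h] at h0; linarith
        simp [hb'_def, hvs, hvt, h0]
      -- strict decrease of the measure
      have hlt : (univ.filter (fun a => x' a ≠ 0)).card + (univ.filter (fun v => b' v ≠ 0)).card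
          < (univ.filter (fun a => x a ≠ 0)).card + (univ.filter (fun v => b v ≠ 0)).card := by
        rcases min_choice (b s) (min (-b t) A) with hm1 | hm
        · -- δ = b s : the vertex s is zeroed in b'
          have hδbs : δ = b s := by rw [hδ_def]; exact hm1
          have hb's : b' s = 0 := by
            show b s - (if s = s then δ else 0) + (if s = t then δ else 0) = 0
            rw [if_pos rfl, if_neg hst]
            linarith
          have hmem : s ∈ univ.filter (fun v => b v ≠ 0) := by
            simp only [mem_filter, mem_univ, true_and]; intro h; linarith
          have hnmem : s ∉ univ.filter (fun v => b' v ≠ 0) := by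
            simp [hb's]
          have : (univ.filter (fun v => b' v ≠ 0)).card < (univ.filter (fun v => b v ≠ 0)).card :=
            Finset.card_lt_card ((Finset.ssubset_iff_of_subset hsubb).mpr ⟨s, hmem, hnmem⟩)
          have := Finset.card_le_card hsubx
          omega
        · rcases min_choice (-b t) A with hm2 | hm2
          · -- δ = -b t : the vertex t is zeroed in b'
            have hδbt : δ = -b t := by rw [hδ_def, hm, hm2]
            have hb't : b' t = 0 := by
              show b t - (if t = s then δ else 0) + (if t = t then δ else 0) = 0
              rw [if_neg (Ne.symm hst), if_pos rfl]
              linarith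
            have hmem : t ∈ univ.filter (fun v => b v ≠ 0) := by
              simp only [mem_filter, mem_univ, true_and]; intro h; linarith
            have hnmem : t ∉ univ.filter (fun v => b' v ≠ 0) := by
              simp [hb't]
            have : (univ.filter (fun v => b' v ≠ 0)).card < (univ.filter (fun v => b v ≠ 0)).card :=
              Finset.card_lt_card ((Finset.ssubset_iff_of_subset hsubb).mpr ⟨t, hmem, hnmem⟩)
            have := Finset.card_le_card hsubx
            omega
          · -- δ = A : some arc of p is zeroed in x'
            have hδA' : δ = A := by rw [hδ_def, hm, hm2]
            obtain ⟨astar, hastar, hAeq⟩ := Finset.exists_mem_eq_inf' hpne (fun a => x a / p.count a)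
            have hastar' : astar ∈ p := List.mem_toFinset.mp hastar
            have hcnt : 0 < p.count astar := List.count_pos_iff.mpr hastar'
            have hcnt' : ((p.count astar : ℝ)) ≠ 0 := by positivity
            have hx'astar : x' astar = 0 := by
              simp only [hx'_def]
              rw [← hA_def] at hAeq
              rw [hδA', hAeq]
              field_simp
              ring
            have hmem : astar ∈ univ.filter (fun a => x a ≠ 0) := by
              simp only [mem_filter, mem_univ, true_and]
              have := hpos astar hastar'
              intro h; linarith
            have hnmem : astar ∉ univ.filter (fun a => x' a ≠ 0) := by
              simp [hx'astar]
            have : (univ.filter (fun a => x' a ≠ 0)).card < (univ.filter (fun a => x a ≠ 0)).card :=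
              Finset.card_lt_card ((Finset.ssubset_iff_of_subset hsubx).mpr ⟨astar, hmem, hnmem⟩)
            have := Finset.card_le_card hsubb
            omega
      have hnn : (univ.filter (fun a => x' a ≠ 0)).card + (univ.filter (fun v => b' v ≠ 0)).card ≤ n := by
        omega
      obtain ⟨P', f', hfpos', hpath', hsum'⟩ := IH x' b' hx'nonneg hcons' hnn
      refine ⟨insert p P', fun q => (if q ∈ P' then f' q else 0) + (if q = p then δ else 0),
        ?_, ?_, ?_⟩
      · intro q hq
        by_cases hqp : q = p
        · subst hqp
          show 0 < (if q ∈ P' then f' q else 0) + (if q = q then δ else 0)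
          by_cases hpP : q ∈ P'
          · rw [if_pos hpP, if_pos rfl]; exact add_pos (hfpos' q hpP) hδpos
          · rw [if_neg hpP, if_pos rfl]; linarith
        · have hqP' : q ∈ P' := (Finset.mem_insert.mp hq).resolve_left hqp
          simp only [if_pos hqP', if_neg hqp, add_zero]
          exact hfpos' q hqP'
      · intro q hq
        by_cases hqp : q = p
        · subst hqp
          exact ⟨hne, hch, hbs, hbt⟩
        · have hqP' : q ∈ P' := (Finset.mem_insert.mp hq).resolve_left hqp
          obtain ⟨hne', hch'', hb's', hb't'⟩ := hpath' q hqP'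
          refine ⟨hne', hch'', ?_, ?_⟩
          · by_cases hss : tl (q.head hne') = s
            · rw [hss]; exact hbs
            · have hstq : tl (q.head hne') ≠ t := by
                intro h; rw [h] at hb's'; linarith
              have : b' (tl (q.head hne')) = b (tl (q.head hne')) := by
                simp [hb'_def, hss, hstq]
              linarith [hb's', this.symm.le, this.le]
          · by_cases htt : hd (q.getLast hne') = t
            · rw [htt]; exact hbt
            · have hstq : hd (q.getLast hne') ≠ s := by
                intro h; rw [h] at hb't'; linarith
              have : b' (hd (q.getLast hne')) = b (hd (q.getLast hne')) := by
                simp [hb'_def, hstq, htt]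
              linarith [hb't', this.symm.le, this.le]
      · intro a
        have hsplit : ∀ q ∈ insert p P',
            ((q.count a : ℝ)) * ((if q ∈ P' then f' q else 0) + (if q = p then δ else 0))
              = (q.count a : ℝ) * (if q ∈ P' then f' q else 0)
                + (q.count a : ℝ) * (if q = p then δ else 0) := fun q _ => mul_add _ _ _
        rw [Finset.sum_congr rfl hsplit, Finset.sum_add_distrib]
        have h1 : ∑ q ∈ insert p P', (q.count a : ℝ) * (if q ∈ P' then f' q else 0)
            = ∑ q ∈ P', (q.count a : ℝ) * f' q := by
          rw [← Finset.sum_subset (Finset.subset_insert p P')]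
          · apply Finset.sum_congr rfl
            intro q hq; rw [if_pos hq]
          · intro q _ hqn; rw [if_neg hqn, mul_zero]
        have h2 : ∑ q ∈ insert p P', (q.count a : ℝ) * (if q = p then δ else 0)
            = (p.count a : ℝ) * δ := by
          rw [Finset.sum_eq_single_of_mem p (Finset.mem_insert_self p P')]
          · rw [if_pos rfl]
          · intro q _ hqp; rw [if_neg hqp, mul_zero]
        rw [h1, h2, hsum' a]
        simp only [hx'_def]
        ring

lemma reduce_card (xx : α → ℝ) :
    ∀ (N : ℕ) (P : Finset (List α)) (f : List α → ℝ), P.card ≤ N →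
    (∀ p ∈ P, 0 < f p) →
    (∀ a : α, ∑ p ∈ P, (p.count a : ℝ) * f p = xx a) →
    ∃ (P' : Finset (List α)) (f' : List α → ℝ),
      P'.card ≤ Fintype.card α ∧ P' ⊆ P ∧
      (∀ p ∈ P', 0 < f' p) ∧
      (∀ a : α, ∑ p ∈ P', (p.count a : ℝ) * f' p = xx a) := by
  intro N
  induction N with
  | zero =>
      intro P f hcard hpos hsum
      exact ⟨P, f, le_trans hcard (Nat.zero_le _), Finset.Subset.refl P, hpos, hsum⟩
  | succ N IH =>
      intro P f hcard hpos hsum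
      by_cases hle : P.card ≤ Fintype.card α
      · exact ⟨P, f, hle, Finset.Subset.refl P, hpos, hsum⟩
      push_neg at hle
      -- the count vectors of the paths in P are linearly dependent
      have hdep : ¬ LinearIndependent ℝ (fun (q : {q // q ∈ P}) => (fun a => (q.1.count a : ℝ))) := by
        intro hli
        have := hli.fintype_card_le_finrank
        rw [Module.finrank_pi ℝ] at this
        rw [Fintype.card_coe] at this
        omega
      rw [Fintype.not_linearIndependent_iff] at hdep
      obtain ⟨g, hg0, i0, hgi0⟩ := hdep
      -- WLOG there is a positive coefficient
      have hwlog : ∃ g : {q // q ∈ P} → ℝ,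
          (∑ i, g i • (fun a => (i.1.count a : ℝ))) = 0 ∧ ∃ i, 0 < g i := by
        rcases lt_trichotomy (g i0) 0 with h | h | h
        · refine ⟨-g, ?_, ⟨i0, by simp only [Pi.neg_apply]; linarith⟩⟩
          rw [← neg_zero, ← hg0, ← Finset.sum_neg_distrib]
          apply Finset.sum_congr rfl
          intro i _
          simp [neg_smul]
        · exact absurd h hgi0
        · exact ⟨g, hg0, i0, h⟩
      obtain ⟨g, hg0, i1, hgi1⟩ := hwlog
      set S : Finset {q // q ∈ P} := univ.filter (fun i => 0 < g i) with hS_def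
      have hSne : S.Nonempty := ⟨i1, by simp [hS_def, hgi1]⟩
      set tmin := S.inf' hSne (fun i => f i.1 / g i) with ht_def
      obtain ⟨istar, histar, hteq⟩ := Finset.exists_mem_eq_inf' hSne (fun i => f i.1 / g i)
      have hgistar : 0 < g istar := by
        have := histar; rw [hS_def, Finset.mem_filter] at this; exact this.2
      have htpos : 0 < tmin := by
        rw [ht_def, Finset.lt_inf'_iff]
        intro i hi
        rw [hS_def, Finset.mem_filter] at hi
        exact div_pos (hpos i.1 i.2) hi.2
      set f' : List α → ℝ := fun q => f q - tmin * (if h : q ∈ P then g ⟨q, h⟩ else 0)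
        with hf'_def
      have hf'nonneg : ∀ q ∈ P, 0 ≤ f' q := by
        intro q hq
        show 0 ≤ f q - tmin * (if h : q ∈ P then g ⟨q, h⟩ else 0)
        rw [dif_pos hq]
        by_cases hgq : 0 < g ⟨q, hq⟩
        · have hmem : (⟨q, hq⟩ : {q // q ∈ P}) ∈ S := by simp [hS_def, hgq]
          have h1 : tmin ≤ f q / g ⟨q, hq⟩ := Finset.inf'_le _ hmem
          have := (le_div_iff₀ hgq).mp h1
          linarith
        · push_neg at hgq
          have : tmin * g ⟨q, hq⟩ ≤ 0 := mul_nonpos_of_nonneg_of_nonpos (le_of_lt htpos) hgq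
          have := hpos q hq
          linarith
      have hf'istar : f' istar.1 = 0 := by
        show f istar.1 - tmin * (if h : istar.1 ∈ P then g ⟨istar.1, h⟩ else 0) = 0
        rw [dif_pos istar.2]
        have : (⟨istar.1, istar.2⟩ : {q // q ∈ P}) = istar := Subtype.ext rfl
        rw [this, ht_def, hteq]
        field_simp
        ring
      set P'' : Finset (List α) := P.filter (fun q => f' q ≠ 0) with hP''_def
      have hP''sub : P'' ⊆ P := Finset.filter_subset _ _
      have hP''ssub : P'' ⊂ P := by
        rw [Finset.ssubset_iff_of_subset hP''sub]
        exact ⟨istar.1, istar.2, by simp [hP''_def, hf'istar]⟩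
      have hP''card : P''.card ≤ N := by
        have := Finset.card_lt_card hP''ssub
        omega
      have hP''pos : ∀ q ∈ P'', 0 < f' q := by
        intro q hq
        rw [hP''_def, Finset.mem_filter] at hq
        exact lt_of_le_of_ne (hf'nonneg q hq.1) (Ne.symm hq.2)
      have hP''sum : ∀ a : α, ∑ q ∈ P'', (q.count a : ℝ) * f' q = xx a := by
        intro a
        have h1 : ∑ q ∈ P'', (q.count a : ℝ) * f' q = ∑ q ∈ P, (q.count a : ℝ) * f' q := by
          apply Finset.sum_subset hP''sub
          intro q hq hqn
          rw [hP''_def, Finset.mem_filter] at hqn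
          have : f' q = 0 := by
            by_contra hc
            exact hqn ⟨hq, hc⟩
          rw [this, mul_zero]
        have h2 : ∑ q ∈ P, (q.count a : ℝ) * (if h : q ∈ P then g ⟨q, h⟩ else 0)
            = ∑ i : {q // q ∈ P}, (i.1.count a : ℝ) * g i := by
          rw [← Finset.sum_attach P (fun q => (q.count a : ℝ) * (if h : q ∈ P then g ⟨q, h⟩ else 0))]
          rw [Finset.univ_eq_attach]
          apply Finset.sum_congr rfl
          intro i _
          rw [dif_pos i.2]
        have h3 : ∑ i : {q // q ∈ P}, (i.1.count a : ℝ) * g i = 0 := by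
          have := congrFun hg0 a
          simp only [Finset.sum_apply, Pi.smul_apply, smul_eq_mul, Pi.zero_apply] at this
          rw [← this]
          apply Finset.sum_congr rfl
          intro i _
          ring
        rw [h1]
        simp only [hf'_def]
        have hexp : ∀ q ∈ P, (q.count a : ℝ) * (f q - tmin * (if h : q ∈ P then g ⟨q, h⟩ else 0))
            = (q.count a : ℝ) * f q
              - tmin * ((q.count a : ℝ) * (if h : q ∈ P then g ⟨q, h⟩ else 0)) := by
          intro q _; ring
        rw [Finset.sum_congr rfl hexp, Finset.sum_sub_distrib, ← Finset.mul_sum, h2, h3,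
          mul_zero, sub_zero]
        exact hsum a
      obtain ⟨P', f'', hc, hsub, hpos', hsum''⟩ := IH P'' f' hP''card hP''pos hP''sum
      exact ⟨P', f'', hc, le_trans hsub hP''sub, hpos', hsum''⟩

end
end StmtFour

open Finset in
/-- Flow decomposition: every nonnegative b-transshipment on a finite DAG
decomposes into at most |A| source-sink paths with positive values whose totals
on each arc equal the flow on that arc. Paths are recorded as lists of arcs. -/
theorem stmt_4 {V α : Type*} [Fintype V] [Fintype α] [DecidableEq V] [DecidableEq α]
    (tl hd : α → V) (b : V → ℝ) (x : α → ℝ)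
    (hx : ∀ a, 0 ≤ x a)
    (hb : ∑ v, b v = 0)
    (hcons : ∀ v : V,
      ∑ a ∈ univ.filter (fun a => tl a = v), x a
        - ∑ a ∈ univ.filter (fun a => hd a = v), x a = b v)
    (hacyc : ∀ v : V, ¬ Relation.TransGen (fun u z => ∃ a, tl a = u ∧ hd a = z) v v) :
    ∃ (P : Finset (List α)) (f : List α → ℝ),
      P.card ≤ Fintype.card α ∧
      (∀ p ∈ P, 0 < f p) ∧
      (∀ p ∈ P, ∃ hne : p ≠ [],
        p.Chain' (fun a a' => hd a = tl a') ∧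
        0 < b (tl (p.head hne)) ∧ b (hd (p.getLast hne)) < 0) ∧
      (∀ a : α, ∑ p ∈ P, (p.count a : ℝ) * f p = x a) := by
  obtain ⟨P0, f0, hpos0, hpath0, hsum0⟩ :=
    StmtFour.aux_decomp tl hd hacyc
      ((univ.filter (fun a => x a ≠ 0)).card + (univ.filter (fun v => b v ≠ 0)).card)
      x b hx hcons le_rfl
  obtain ⟨P, f, hcard, hsub, hpos, hsum⟩ :=
    StmtFour.reduce_card x P0.card P0 f0 le_rfl hpos0 hsum0
  exact ⟨P, f, hcard, hpos, fun p hp => hpath0 p (hsub hp), hsum⟩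
end

section
/- For all integers n ≥ 1, all reals c_a ≥ c_min > 0, d_max with d_max ≤ (1 − 1/n)·c_min, and all reals u_1,…,u_{n+1} ≥ 0 with ∑_{α=1}^{n+1} u_α ≤ 1 + (n+1)·ε where ε ≤ 1/((n²−1)(n+1)) and n ≥ 2, it holds that c_a/(n+1) + d_max·∑_{α=1}^{n+1} u_α ≤ c_a. -/
/-- Feasibility inequality for routing critically split sinks in rounds. -/
theorem stmt_5 (n : ℕ) (hn : 2 ≤ n) (ca cmin dmax ε : ℝ)
    (hcmin : 0 < cmin) (hca : cmin ≤ ca)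
    (hd : dmax ≤ (1 - 1 / (n : ℝ)) * cmin)
    (u : Fin (n + 1) → ℝ) (hu : ∀ α, 0 ≤ u α)
    (hε : ε ≤ 1 / (((n : ℝ) ^ 2 - 1) * ((n : ℝ) + 1)))
    (hsum : ∑ α, u α ≤ 1 + ((n : ℝ) + 1) * ε) :
    ca / ((n : ℝ) + 1) + dmax * ∑ α, u α ≤ ca := by
  have hn2 : (2:ℝ) ≤ (n:ℝ) := by exact_mod_cast hn
  have hnpos : (0:ℝ) < (n:ℝ) := by linarith
  have hn1 : (0:ℝ) < (n:ℝ) + 1 := by linarith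
  have hsq : (0:ℝ) < ((n:ℝ)^2 - 1) * ((n:ℝ)+1) := by nlinarith
  set S := ∑ α, u α with hSdef
  have hS : 0 ≤ S := Finset.sum_nonneg fun i _ => hu i
  have hd' : dmax * (n:ℝ) ≤ ((n:ℝ) - 1) * cmin := by
    have := mul_le_mul_of_nonneg_right hd (le_of_lt hnpos)
    calc dmax * (n:ℝ) ≤ (1 - 1/(n:ℝ)) * cmin * (n:ℝ) := this
      _ = ((n:ℝ) - 1) * cmin := by field_simp
  have hε' : ε * (((n:ℝ)^2 - 1) * ((n:ℝ)+1)) ≤ 1 := by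
    have := mul_le_mul_of_nonneg_right hε (le_of_lt hsq)
    calc ε * (((n:ℝ)^2 - 1) * ((n:ℝ)+1)) ≤
        1 / (((n:ℝ)^2 - 1) * ((n:ℝ)+1)) * (((n:ℝ)^2 - 1) * ((n:ℝ)+1)) := this
      _ = 1 := one_div_mul_cancel (ne_of_gt hsq)
  rw [div_add' _ _ _ (ne_of_gt hn1), div_le_iff₀ hn1]
  rcases le_or_gt dmax 0 with hneg | hpos
  · nlinarith [mul_nonpos_of_nonpos_of_nonneg hneg hS]
  · have hSle : S ≤ 1 + ((n:ℝ)+1) * ε := hsum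
    nlinarith [mul_le_mul_of_nonneg_left hSle (le_of_lt hpos), mul_pos hpos hnpos,
      mul_le_mul_of_nonneg_right hd' (le_of_lt hn1), mul_nonneg (le_of_lt hpos) hS]
end
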